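/- Let n ≥ 1, q₀ ≥ 1 and M > 0. There exists a continuous non-decreasing function κ : [0,2] → [0,∞) with κ(0) = 0, depending only on n, q₀ and M, with the following property: for any two Borel probability measures m and μ on ℝ^{2n} satisfying ∫ ‖v‖^{2q₀} m(dv) ≤ M and ∫ ‖v‖^{2q₀} μ(dv) ≤ M, the pushforward measures I∘m and I∘μ on ℝ^n under the action map I (with I_k(v) = ½‖v_k‖²) satisfy ‖I∘m − I∘μ‖*_L ≤ κ( ‖m − μ‖*_L ), where ‖·‖*_L denotes the dual-Lipschitz distance on the corresponding space. -/

import Mathlib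

open MeasureTheory Real

noncomputable section

/-- `ℝ^{2n} = (ℝ²)ⁿ`, with Euclidean norm. -/
abbrev E2n (n : ℕ) := EuclideanSpace ℝ (Fin n × Fin 2)

/-- The action map `I : ℝ^{2n} → ℝⁿ`, with `I_k(v) = ½‖v_k‖²`. -/
noncomputable def actionMap (n : ℕ) (v : E2n n) : EuclideanSpace ℝ (Fin n) :=
  (EuclideanSpace.equiv (Fin n) ℝ).symm fun k => ((v (k, 0)) ^ 2 + (v (k, 1)) ^ 2) / 2

/-- The set of values `∫ f dμ − ∫ f dν` over bounded Lipschitz `f` with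
`Lip(f) + sup|f| ≤ 1`. -/
def dualLipSet {X : Type*} [MetricSpace X] [MeasurableSpace X]
    (μ ν : Measure X) : Set ℝ :=
  {r | ∃ f : X → ℝ, ∃ L C : ℝ, 0 ≤ L ∧ 0 ≤ C ∧ L + C ≤ 1 ∧
      (∀ x y, |f x - f y| ≤ L * dist x y) ∧ (∀ x, |f x| ≤ C) ∧
      r = (∫ x, f x ∂μ) - ∫ x, f x ∂ν}

/-- The dual-Lipschitz (Kantorovich–Rubinstein) distance between two measures. -/
noncomputable def dualLip {X : Type*} [MetricSpace X] [MeasurableSpace X]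
    (μ ν : Measure X) : ℝ :=
  sSup (dualLipSet μ ν)

namespace DLaux

variable {n : ℕ}

lemma actionMap_apply (v : E2n n) (k : Fin n) :
    actionMap n v k = ((v (k, 0)) ^ 2 + (v (k, 1)) ^ 2) / 2 := rfl

lemma abs_coord_le_norm (v : E2n n) (p : Fin n × Fin 2) : |v p| ≤ ‖v‖ := by
  have h := EuclideanSpace.norm_eq v
  have h1 : |v p| = Real.sqrt (‖v p‖ ^ 2) := by
    rw [Real.sqrt_sq_eq_abs]; simp [Real.norm_eq_abs, abs_abs]
  rw [h, h1]
  apply Real.sqrt_le_sqrt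
  exact Finset.single_le_sum (fun i _ => sq_nonneg ‖v i‖) (Finset.mem_univ p)

/-- radial truncation onto the ball of radius `R`. -/
def trunc (R : ℝ) (v : E2n n) : E2n n := (R / max R ‖v‖) • v

lemma trunc_eq_self {R : ℝ} (hR : 0 < R) {v : E2n n} (h : ‖v‖ ≤ R) :
    trunc R v = v := by
  unfold trunc
  rw [max_eq_left h, div_self hR.ne', one_smul]

lemma norm_trunc_le {R : ℝ} (hR : 0 < R) (v : E2n n) : ‖trunc R v‖ ≤ R := by
  unfold trunc
  rw [norm_smul]
  have hmax : 0 < max R ‖v‖ := lt_of_lt_of_le hR (le_max_left _ _)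
  have : ‖R / max R ‖v‖‖ = R / max R ‖v‖ := by
    rw [Real.norm_eq_abs, abs_of_nonneg (div_nonneg hR.le hmax.le)]
  rw [this, div_mul_eq_mul_div, div_le_iff₀ hmax]
  have := le_max_right R ‖v‖
  nlinarith [norm_nonneg v]

lemma trunc_lip_aux {R : ℝ} (hR : 0 < R) {v w : E2n n} (hwv : ‖w‖ ≤ ‖v‖) :
    ‖trunc R v - trunc R w‖ ≤ 2 * ‖v - w‖ := by
  set P := max R ‖v‖ with hP
  set Q := max R ‖w‖ with hQ
  have hQpos : 0 < Q := lt_of_lt_of_le hR (le_max_left _ _)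
  have hPpos : 0 < P := lt_of_lt_of_le hR (le_max_left _ _)
  have hQP : Q ≤ P := max_le_max le_rfl hwv
  have hRQ : R ≤ Q := le_max_left _ _
  have hwQ : ‖w‖ ≤ Q := le_max_right _ _
  have hPv : P + ‖w‖ ≤ ‖v‖ + Q := by
    rcases max_cases R ‖v‖ with ⟨h1, h2⟩ | ⟨h1, h2⟩
    · rw [hP, h1]; have : ‖w‖ ≤ ‖v‖ := hwv; linarith [le_max_left R ‖w‖, hwv, h2]
    · rw [hP, h1]; linarith [hwQ]
  have ha : (0:ℝ) ≤ R / P := div_nonneg hR.le hPpos.le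
  have haone : R / P ≤ 1 := by rw [div_le_one hPpos]; exact le_max_left _ _
  have key : (R / Q - R / P) * ‖w‖ ≤ ‖v‖ - ‖w‖ := by
    have hs : 0 ≤ R / Q - R / P := by
      apply sub_nonneg.2
      apply div_le_div_of_nonneg_left hR.le hQpos hQP
    have h1 : (R / Q - R / P) * ‖w‖ ≤ (R / Q - R / P) * Q :=
      mul_le_mul_of_nonneg_left hwQ hs
    have h2 : (R / Q - R / P) * Q = R - R * Q / P := by
      field_simp
    have h3 : R - R * Q / P ≤ P - Q := by
      have e : R - R * Q / P = R * (P - Q) / P := by field_simp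
      rw [e, div_le_iff₀ hPpos]
      nlinarith
    linarith
  have hdecomp : trunc R v - trunc R w
      = (R / P) • (v - w) + (R / P - R / Q) • w := by
    unfold trunc; rw [← hP, ← hQ]
    rw [smul_sub, sub_smul]; abel
  calc ‖trunc R v - trunc R w‖
      ≤ ‖(R / P) • (v - w)‖ + ‖(R / P - R / Q) • w‖ := by
        rw [hdecomp]; exact norm_add_le _ _
    _ ≤ ‖v - w‖ + (R / Q - R / P) * ‖w‖ := by
        rw [norm_smul, norm_smul, Real.norm_eq_abs, Real.norm_eq_abs]
        have h1 : |R / P| ≤ 1 := by rw [abs_of_nonneg ha]; exact haone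
        have h2 : |R / P - R / Q| = R / Q - R / P := by
          rw [abs_sub_comm, abs_of_nonneg]
          apply sub_nonneg.2 (div_le_div_of_nonneg_left hR.le hQpos hQP)
        rw [h2]
        have := norm_nonneg (v - w)
        nlinarith
    _ ≤ ‖v - w‖ + (‖v‖ - ‖w‖) := by linarith
    _ ≤ 2 * ‖v - w‖ := by
        have := norm_sub_norm_le v w
        linarith

lemma trunc_lip {R : ℝ} (hR : 0 < R) (v w : E2n n) :
    ‖trunc R v - trunc R w‖ ≤ 2 * ‖v - w‖ := by
  rcases le_total ‖w‖ ‖v‖ with h | h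
  · exact trunc_lip_aux hR h
  · rw [← norm_neg, neg_sub, ← norm_neg (v - w), neg_sub]
    exact trunc_lip_aux hR h

lemma dist_actionMap_le {R : ℝ} (hR : 0 ≤ R) {v w : E2n n}
    (hv : ‖v‖ ≤ R) (hw : ‖w‖ ≤ R) :
    dist (actionMap n v) (actionMap n w) ≤ 2 * R * dist v w := by
  have hsum : ∑ k : Fin n, dist (actionMap n v k) (actionMap n w k) ^ 2
      ≤ (2 * R) ^ 2 * ∑ p : Fin n × Fin 2, dist (v p) (w p) ^ 2 := by
    rw [Finset.mul_sum, Fintype.sum_prod_type]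
    apply Finset.sum_le_sum
    intro k _
    have hv0 : |v (k, 0)| ≤ R := (abs_coord_le_norm v _).trans hv
    have hv1 : |v (k, 1)| ≤ R := (abs_coord_le_norm v _).trans hv
    have hw0 : |w (k, 0)| ≤ R := (abs_coord_le_norm w _).trans hw
    have hw1 : |w (k, 1)| ≤ R := (abs_coord_le_norm w _).trans hw
    rw [Fin.sum_univ_two]
    simp only [actionMap_apply, Real.dist_eq, sq_abs]
    rw [abs_le] at hv0 hv1 hw0 hw1
    have hs2 : (v (k,0) + w (k,0)) ^ 2 ≤ 4 * R ^ 2 := by nlinarith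
    have ht2 : (v (k,1) + w (k,1)) ^ 2 ≤ 4 * R ^ 2 := by nlinarith
    nlinarith [sq_nonneg ((v (k,0) - w (k,0)) * (v (k,1) + w (k,1))
        - (v (k,1) - w (k,1)) * (v (k,0) + w (k,0))),
      mul_nonneg (sq_nonneg (v (k,0) - w (k,0))) (sub_nonneg.2 hs2),
      mul_nonneg (sq_nonneg (v (k,1) - w (k,1))) (sub_nonneg.2 ht2),
      mul_nonneg (sq_nonneg (v (k,0) - w (k,0))) (sub_nonneg.2 ht2),
      mul_nonneg (sq_nonneg (v (k,1) - w (k,1))) (sub_nonneg.2 hs2)]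
  rw [EuclideanSpace.dist_eq, EuclideanSpace.dist_eq]
  calc √(∑ k : Fin n, dist (actionMap n v k) (actionMap n w k) ^ 2)
      ≤ √((2 * R) ^ 2 * ∑ p : Fin n × Fin 2, dist (v p) (w p) ^ 2) :=
        Real.sqrt_le_sqrt hsum
    _ = 2 * R * √(∑ p : Fin n × Fin 2, dist (v p) (w p) ^ 2) := by
        rw [Real.sqrt_mul (sq_nonneg _), Real.sqrt_sq (by linarith)]

lemma continuous_actionMap : Continuous (actionMap n) := by
  unfold actionMap
  apply (EuclideanSpace.equiv (Fin n) ℝ).symm.continuous.comp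
  apply continuous_pi
  intro k
  have h0 : Continuous fun v : E2n n => v (k, 0) :=
    (continuous_apply _).comp (EuclideanSpace.equiv (Fin n × Fin 2) ℝ).continuous
  have h1 : Continuous fun v : E2n n => v (k, 1) :=
    (continuous_apply _).comp (EuclideanSpace.equiv (Fin n × Fin 2) ℝ).continuous
  continuity

lemma continuous_trunc {R : ℝ} (hR : 0 < R) : Continuous (trunc R : E2n n → E2n n) := by
  unfold trunc
  refine (show Continuous (fun v : E2n n => R / max R ‖v‖) from ?_).smul continuous_id
  apply continuous_const.div (continuous_const.max continuous_norm)
  intro v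
  exact (lt_of_lt_of_le hR (le_max_left _ _)).ne'

end DLaux

end

namespace DLaux

lemma continuous_of_lip {X : Type*} [MetricSpace X] {f : X → ℝ} {L : ℝ} (hL : 0 ≤ L)
    (h : ∀ x y, |f x - f y| ≤ L * dist x y) : Continuous f := by
  have : LipschitzWith L.toNNReal f := by
    apply LipschitzWith.of_dist_le_mul
    intro x y
    rw [Real.dist_eq, Real.coe_toNNReal _ hL]
    exact h x y
  exact this.continuous

lemma integrable_of_bound {X : Type*} [MeasurableSpace X] (μ : Measure X)
    [IsProbabilityMeasure μ] {f : X → ℝ} (hf : AEStronglyMeasurable f μ) {C : ℝ}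
    (h : ∀ x, |f x| ≤ C) : Integrable f μ :=
  Integrable.mono' (integrable_const C) hf
    (ae_of_all _ fun x => by simpa [Real.norm_eq_abs] using h x)

lemma abs_integral_le {X : Type*} [MeasurableSpace X] (μ : Measure X)
    [IsProbabilityMeasure μ] {f : X → ℝ} {C : ℝ}
    (h : ∀ x, |f x| ≤ C) : |∫ x, f x ∂μ| ≤ C := by
  have := norm_integral_le_of_norm_le_const (μ := μ) (f := f) (C := C)
    (ae_of_all _ fun x => by simpa [Real.norm_eq_abs] using h x)
  simpa [Real.norm_eq_abs, measure_univ] using this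

lemma dualLipSet_elem_le_two {X : Type*} [MetricSpace X] [MeasurableSpace X]
    (μ ν : Measure X) [IsProbabilityMeasure μ] [IsProbabilityMeasure ν] {r : ℝ}
    (hr : r ∈ dualLipSet μ ν) : r ≤ 2 := by
  obtain ⟨f, L, C, hL, hC, hLC, hfl, hfb, rfl⟩ := hr
  have h1 := abs_integral_le μ hfb
  have h2 := abs_integral_le ν hfb
  rw [abs_le] at h1 h2
  linarith

lemma bddAbove_dualLipSet {X : Type*} [MetricSpace X] [MeasurableSpace X]
    (μ ν : Measure X) [IsProbabilityMeasure μ] [IsProbabilityMeasure ν] :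
    BddAbove (dualLipSet μ ν) :=
  ⟨2, fun _ hr => dualLipSet_elem_le_two μ ν hr⟩

lemma zero_mem_dualLipSet {X : Type*} [MetricSpace X] [MeasurableSpace X]
    (μ ν : Measure X) : (0:ℝ) ∈ dualLipSet μ ν :=
  ⟨0, 0, 0, le_rfl, le_rfl, by norm_num, by simp, by simp, by simp⟩

lemma dualLip_nonneg {X : Type*} [MetricSpace X] [MeasurableSpace X]
    (μ ν : Measure X) [IsProbabilityMeasure μ] [IsProbabilityMeasure ν] :
    0 ≤ dualLip μ ν :=
  le_csSup (bddAbove_dualLipSet μ ν) (zero_mem_dualLipSet μ ν)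

lemma continuous_rpow_norm (e : ℝ) (he : 0 ≤ e) :
    Continuous (fun v : E2n n => ‖v‖ ^ e) := by
  have h1 : Continuous fun x : ℝ => x ^ e :=
    continuous_iff_continuousAt.2 fun x => Real.continuousAt_rpow_const x e (Or.inr he)
  exact h1.comp continuous_norm

lemma moment_facts {M : ℝ} (hM : 0 ≤ M) (m : Measure (E2n n)) [IsProbabilityMeasure m]
    {e : ℝ} (he : 0 ≤ e)
    (hmom : ∫⁻ v, ENNReal.ofReal (‖v‖ ^ e) ∂m ≤ ENNReal.ofReal M) :
    Integrable (fun v => ‖v‖ ^ e) m ∧ ∫ v, ‖v‖ ^ e ∂m ≤ M := by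
  have hmeas : AEStronglyMeasurable (fun v : E2n n => ‖v‖ ^ e) m :=
    (continuous_rpow_norm e he).aestronglyMeasurable
  have hnn : 0 ≤ᵐ[m] fun v : E2n n => ‖v‖ ^ e :=
    ae_of_all _ fun v => Real.rpow_nonneg (norm_nonneg v) e
  have hfin : HasFiniteIntegral (fun v : E2n n => ‖v‖ ^ e) m := by
    rw [hasFiniteIntegral_iff_ofReal hnn]
    exact lt_of_le_of_lt hmom ENNReal.ofReal_lt_top
  refine ⟨⟨hmeas, hfin⟩, ?_⟩
  rw [integral_eq_lintegral_of_nonneg_ae hnn hmeas]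
  calc (∫⁻ v, ENNReal.ofReal (‖v‖ ^ e) ∂m).toReal
      ≤ (ENNReal.ofReal M).toReal := ENNReal.toReal_mono ENNReal.ofReal_ne_top hmom
    _ = M := ENNReal.toReal_ofReal hM

end DLaux

namespace DLaux

lemma key_ineq (n : ℕ) {q₀ : ℝ} (hq₀ : 1 ≤ q₀) {M : ℝ} (hM : 0 < M)
    (m μ : Measure (E2n n)) [IsProbabilityMeasure m] [IsProbabilityMeasure μ]
    (hm : ∫⁻ v, ENNReal.ofReal (‖v‖ ^ (2 * q₀)) ∂m ≤ ENNReal.ofReal M)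
    (hμ : ∫⁻ v, ENNReal.ofReal (‖v‖ ^ (2 * q₀)) ∂μ ≤ ENNReal.ofReal M)
    {r : ℝ}
    (hr : r ∈ dualLipSet (Measure.map (actionMap n) m) (Measure.map (actionMap n) μ))
    {R : ℝ} (hR : 1 ≤ R) :
    r ≤ (4 * R + 1) * dualLip m μ + 4 * M / R ^ 2 := by
  have hR0 : (0:ℝ) < R := lt_of_lt_of_le one_pos hR
  have he : (0:ℝ) ≤ 2 * q₀ := by linarith
  obtain ⟨g, L, C, hL, hC, hLC, hgl, hgb, rfl⟩ := hr
  have hC1 : C ≤ 1 := by linarith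
  have hL1 : L ≤ 1 := by linarith
  have hgc : Continuous g := continuous_of_lip hL hgl
  have hAmeas : Measurable (actionMap n) := continuous_actionMap.measurable
  have e1 : ∫ x, g x ∂(Measure.map (actionMap n) m) = ∫ v, g (actionMap n v) ∂m :=
    integral_map hAmeas.aemeasurable hgc.aestronglyMeasurable
  have e2 : ∫ x, g x ∂(Measure.map (actionMap n) μ) = ∫ v, g (actionMap n v) ∂μ :=
    integral_map hAmeas.aemeasurable hgc.aestronglyMeasurable
  set F : E2n n → ℝ := fun v => g (actionMap n (trunc R v)) with hF
  have hFc : Continuous F := hgc.comp (continuous_actionMap.comp (continuous_trunc hR0))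
  have hGc : Continuous fun v : E2n n => g (actionMap n v) :=
    hgc.comp continuous_actionMap
  -- pointwise tail bound
  have hpt : ∀ v : E2n n, |g (actionMap n v) - F v|
      ≤ (2 / R ^ (2 * q₀)) * ‖v‖ ^ (2 * q₀) := by
    intro v
    have hRpow : (0:ℝ) < R ^ (2 * q₀) := Real.rpow_pos_of_pos hR0 _
    have hvpow : (0:ℝ) ≤ ‖v‖ ^ (2 * q₀) := Real.rpow_nonneg (norm_nonneg v) _
    rcases le_or_gt ‖v‖ R with h | h
    · show |g (actionMap n v) - g (actionMap n (trunc R v))| ≤ _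
      rw [trunc_eq_self hR0 h, sub_self, abs_zero]
      positivity
    · have h1 : |g (actionMap n v) - F v| ≤ 2 := by
        have b1 := hgb (actionMap n v)
        have b2 := hgb (actionMap n (trunc R v))
        calc |g (actionMap n v) - F v|
            ≤ |g (actionMap n v)| + |F v| := abs_sub _ _
          _ ≤ 2 := by rw [hF]; dsimp only; linarith
      have h2 : (1:ℝ) ≤ (‖v‖ / R) ^ (2 * q₀) :=
        Real.one_le_rpow (by rw [le_div_iff₀ hR0]; linarith) he
      rw [Real.div_rpow (norm_nonneg v) hR0.le] at h2
      calc |g (actionMap n v) - F v| ≤ 2 := h1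
        _ ≤ 2 * (‖v‖ ^ (2 * q₀) / R ^ (2 * q₀)) := by nlinarith
        _ = (2 / R ^ (2 * q₀)) * ‖v‖ ^ (2 * q₀) := by ring
  obtain ⟨hintm, hmm⟩ := moment_facts hM.le m he hm
  obtain ⟨hintμ, hμμ⟩ := moment_facts hM.le μ he hμ
  -- tail estimate
  have tail : ∀ (ν : Measure (E2n n)), IsProbabilityMeasure ν →
      Integrable (fun v => ‖v‖ ^ (2 * q₀)) ν → (∫ v, ‖v‖ ^ (2 * q₀) ∂ν) ≤ M →
      |(∫ v, g (actionMap n v) ∂ν) - ∫ v, F v ∂ν| ≤ 2 * M / R ^ 2 := by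
    intro ν hν hφ hφM
    haveI := hν
    have hGν : Integrable (fun v => g (actionMap n v)) ν :=
      integrable_of_bound ν hGc.aestronglyMeasurable (fun v => hgb _)
    have hFν : Integrable F ν :=
      integrable_of_bound ν hFc.aestronglyMeasurable (fun v => hgb _)
    have hRpow : (0:ℝ) < R ^ (2 * q₀) := Real.rpow_pos_of_pos hR0 _
    have step1 : |(∫ v, g (actionMap n v) ∂ν) - ∫ v, F v ∂ν|
        ≤ ∫ v, |g (actionMap n v) - F v| ∂ν := by
      rw [← integral_sub hGν hFν]
      simpa [Real.norm_eq_abs] using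
        norm_integral_le_integral_norm (fun v => g (actionMap n v) - F v) (μ := ν)
    have step2 : ∫ v, |g (actionMap n v) - F v| ∂ν
        ≤ ∫ v, (2 / R ^ (2 * q₀)) * ‖v‖ ^ (2 * q₀) ∂ν := by
      apply integral_mono ((hGν.sub hFν).abs) (hφ.const_mul _)
      intro v; exact hpt v
    have step3 : ∫ v, (2 / R ^ (2 * q₀)) * ‖v‖ ^ (2 * q₀) ∂ν
        ≤ 2 * M / R ^ (2 * q₀) := by
      rw [integral_const_mul]
      have h1 : (2 / R ^ (2 * q₀)) * (∫ v, ‖v‖ ^ (2 * q₀) ∂ν)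
          ≤ (2 / R ^ (2 * q₀)) * M :=
        mul_le_mul_of_nonneg_left hφM (by positivity)
      calc (2 / R ^ (2 * q₀)) * (∫ v, ‖v‖ ^ (2 * q₀) ∂ν)
          ≤ (2 / R ^ (2 * q₀)) * M := h1
        _ = 2 * M / R ^ (2 * q₀) := by ring
    have step4 : 2 * M / R ^ (2 * q₀) ≤ 2 * M / R ^ 2 := by
      have h2 : R ^ (2:ℝ) ≤ R ^ (2 * q₀) :=
        Real.rpow_le_rpow_of_exponent_le hR (by linarith)
      rw [Real.rpow_two] at h2
      have : (0:ℝ) < R ^ 2 := by positivity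
      apply div_le_div_of_nonneg_left (by linarith) this h2
    linarith
  have t1 := tail m ‹_› hintm hmm
  have t2 := tail μ ‹_› hintμ hμμ
  -- middle bound via dualLip
  have hd : (∫ v, F v ∂m) - ∫ v, F v ∂μ ≤ (4 * R + 1) * dualLip m μ := by
    set c : ℝ := 4 * R + 1 with hc
    have hcpos : (0:ℝ) < c := by rw [hc]; linarith
    set h : E2n n → ℝ := fun v => F v / c with hh
    have hmem : ((∫ v, h v ∂m) - ∫ v, h v ∂μ) ∈ dualLipSet m μ := by
      refine ⟨h, 4 * R / c, 1 / c, by positivity, by positivity, ?_, ?_, ?_, rfl⟩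
      · rw [← add_div, hc, div_self hcpos.ne']
      · intro x y
        have hlip : |F x - F y| ≤ 4 * R * dist x y := by
          have s1 : |F x - F y| ≤ L * dist (actionMap n (trunc R x)) (actionMap n (trunc R y)) :=
            hgl _ _
          have s2 : dist (actionMap n (trunc R x)) (actionMap n (trunc R y))
              ≤ 2 * R * dist (trunc R x) (trunc R y) :=
            dist_actionMap_le hR0.le (norm_trunc_le hR0 x) (norm_trunc_le hR0 y)
          have s3 : dist (trunc R x) (trunc R y) ≤ 2 * dist x y := by
            rw [dist_eq_norm, dist_eq_norm]
            exact trunc_lip hR0 x y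
          have hdist : (0:ℝ) ≤ dist x y := dist_nonneg
          have hd1 : (0:ℝ) ≤ dist (actionMap n (trunc R x)) (actionMap n (trunc R y)) :=
            dist_nonneg
          have hd2 : (0:ℝ) ≤ dist (trunc R x) (trunc R y) := dist_nonneg
          nlinarith
        show |F x / c - F y / c| ≤ 4 * R / c * dist x y
        rw [div_sub_div_same, abs_div, abs_of_pos hcpos, div_mul_eq_mul_div]
        gcongr
      · intro x
        show |F x / c| ≤ 1 / c
        rw [abs_div, abs_of_pos hcpos]
        gcongr
        exact (hgb _).trans hC1
    have hle : (∫ v, h v ∂m) - ∫ v, h v ∂μ ≤ dualLip m μ :=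
      le_csSup (bddAbove_dualLipSet m μ) hmem
    have em : ∫ v, h v ∂m = (∫ v, F v ∂m) / c := by
      rw [hh]; exact integral_div c F
    have eμ : ∫ v, h v ∂μ = (∫ v, F v ∂μ) / c := by
      rw [hh]; exact integral_div c F
    rw [em, eμ, div_sub_div_same] at hle
    rw [div_le_iff₀ hcpos] at hle
    calc (∫ v, F v ∂m) - ∫ v, F v ∂μ ≤ dualLip m μ * c := hle
      _ = (4 * R + 1) * dualLip m μ := by rw [hc]; ring
  rw [e1, e2]
  rw [abs_le] at t1 t2
  have A1 := t1.2
  have A2 := t2.1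
  have hx : (∫ v, g (actionMap n v) ∂m - ∫ v, F v ∂m)
      + ((∫ v, F v ∂m) - ∫ v, F v ∂μ)
      + ((∫ v, F v ∂μ) - ∫ v, g (actionMap n v) ∂μ)
      = ∫ v, g (actionMap n v) ∂m - ∫ v, g (actionMap n v) ∂μ := by ring
  have h4 : 4 * M / R ^ 2 = 2 * M / R ^ 2 + 2 * M / R ^ 2 := by ring
  rw [h4]
  linarith [A1, A2, hd, hx]
end DLaux

/-- Given `n`, `q₀ ≥ 1` and `M > 0`, there is a continuous non-decreasing function
`κ : [0,2] → [0,∞)` with `κ(0) = 0` such that for any two Borel probability measures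
`m, μ` on `ℝ^{2n}` with `2q₀`-th moments bounded by `M`, the pushforwards under the
action map satisfy `‖I∘m − I∘μ‖*_L ≤ κ(‖m − μ‖*_L)`. -/
theorem pushforward_actions_dualLip_modulus
    (n : ℕ) (hn : 1 ≤ n) (q₀ : ℝ) (hq₀ : 1 ≤ q₀) (M : ℝ) (hM : 0 < M) :
    ∃ κ : ℝ → ℝ,
      ContinuousOn κ (Set.Icc 0 2) ∧ MonotoneOn κ (Set.Icc 0 2) ∧ κ 0 = 0 ∧
      (∀ x ∈ Set.Icc (0:ℝ) 2, 0 ≤ κ x) ∧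
      ∀ m μ : Measure (E2n n), IsProbabilityMeasure m → IsProbabilityMeasure μ →
        (∫⁻ v, ENNReal.ofReal (‖v‖ ^ (2 * q₀)) ∂m) ≤ ENNReal.ofReal M →
        (∫⁻ v, ENNReal.ofReal (‖v‖ ^ (2 * q₀)) ∂μ) ≤ ENNReal.ofReal M →
        dualLip (Measure.map (actionMap n) m) (Measure.map (actionMap n) μ)
          ≤ κ (dualLip m μ) := by
  classical
  set A : ℝ := 4 + 4 * M with hA
  have hA4 : (4:ℝ) ≤ A := by rw [hA]; linarith
  refine ⟨fun t => t + A * t ^ ((2:ℝ)/3), ?_, ?_, ?_, ?_, ?_⟩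
  · have h1 : Continuous fun t : ℝ => t ^ ((2:ℝ)/3) :=
      continuous_iff_continuousAt.2 fun x =>
        Real.continuousAt_rpow_const x _ (Or.inr (by norm_num))
    exact (continuous_id.add (continuous_const.mul h1)).continuousOn
  · intro a ha b hb hab
    dsimp only
    have h1 : a ^ ((2:ℝ)/3) ≤ b ^ ((2:ℝ)/3) :=
      Real.rpow_le_rpow ha.1 hab (by norm_num)
    have hA0 : (0:ℝ) ≤ A := by linarith
    nlinarith
  · simp [Real.zero_rpow (show ((2:ℝ)/3) ≠ 0 by norm_num)]
  · intro x hx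
    dsimp only
    have h1 : (0:ℝ) ≤ x ^ ((2:ℝ)/3) := Real.rpow_nonneg hx.1 _
    nlinarith [mul_nonneg (by linarith : (0:ℝ) ≤ A) h1, hx.1]
  · intro m μ hPm hPμ hm hμ
    haveI := hPm; haveI := hPμ
    haveI : IsProbabilityMeasure (Measure.map (actionMap n) m) :=
      Measure.isProbabilityMeasure_map DLaux.continuous_actionMap.measurable.aemeasurable
    haveI : IsProbabilityMeasure (Measure.map (actionMap n) μ) :=
      Measure.isProbabilityMeasure_map DLaux.continuous_actionMap.measurable.aemeasurable
    set d := dualLip m μ with hdd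
    have hd0 : 0 ≤ d := DLaux.dualLip_nonneg m μ
    have hd23 : (0:ℝ) ≤ d ^ ((2:ℝ)/3) := Real.rpow_nonneg hd0 _
    show dualLip _ _ ≤ d + A * d ^ ((2:ℝ)/3)
    have hκ0 : (0:ℝ) ≤ d + A * d ^ ((2:ℝ)/3) := by
      nlinarith [mul_nonneg (by linarith : (0:ℝ) ≤ A) hd23]
    refine Real.sSup_le ?_ hκ0
    intro r hr
    rcases eq_or_lt_of_le hd0 with hd | hdpos
    · -- d = 0
      have hz : d + A * d ^ ((2:ℝ)/3) = 0 := by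
        rw [← hd]
        simp [Real.zero_rpow (show ((2:ℝ)/3) ≠ 0 by norm_num)]
      rw [hz]
      by_contra hcon
      push_neg at hcon
      set R : ℝ := max 1 (Real.sqrt (8 * M / r)) with hRdef
      have hR1 : (1:ℝ) ≤ R := le_max_left _ _
      have hkey := DLaux.key_ineq n hq₀ hM m μ hm hμ hr hR1
      rw [← hdd, ← hd] at hkey
      have h8 : (0:ℝ) ≤ 8 * M / r := by positivity
      have hR2 : 8 * M / r ≤ R ^ 2 := by
        have h1 : Real.sqrt (8 * M / r) ≤ R := le_max_right _ _
        nlinarith [Real.sq_sqrt h8, Real.sqrt_nonneg (8 * M / r)]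
      have hRpos : (0:ℝ) < R := by linarith
      have h5 : 8 * M ≤ r * R ^ 2 := by
        have := mul_le_mul_of_nonneg_left hR2 hcon.le
        have he : r * (8 * M / r) = 8 * M := by field_simp
        linarith
      have h7 : r * R ^ 2 ≤ 4 * M := by
        have h6 := mul_le_mul_of_nonneg_right hkey (sq_nonneg R)
        have he : ((4 * R + 1) * 0 + 4 * M / R ^ 2) * R ^ 2 = 4 * M := by
          field_simp
          ring
        linarith
      linarith
    · rcases le_or_gt d 1 with hd1 | hd1
      · -- 0 < d ≤ 1
        set R : ℝ := d ^ (-(1:ℝ)/3) with hRdef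
        have hR1 : (1:ℝ) ≤ R :=
          Real.one_le_rpow_of_pos_of_le_one_of_nonpos hdpos hd1 (by norm_num)
        have hkey := DLaux.key_ineq n hq₀ hM m μ hm hμ hr hR1
        rw [← hdd] at hkey
        have hRd : R * d = d ^ ((2:ℝ)/3) := by
          rw [hRdef]
          calc d ^ (-(1:ℝ)/3) * d = d ^ (-(1:ℝ)/3) * d ^ (1:ℝ) := by
                rw [Real.rpow_one]
            _ = d ^ ((-(1:ℝ)/3) + 1) := (Real.rpow_add hdpos _ _).symm
            _ = d ^ ((2:ℝ)/3) := by norm_num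
        have hR2 : R ^ 2 = d ^ (-(2:ℝ)/3) := by
          rw [hRdef, ← Real.rpow_two, ← Real.rpow_mul hdpos.le]
          norm_num
        have hinv : d ^ (-(2:ℝ)/3) * d ^ ((2:ℝ)/3) = 1 := by
          rw [← Real.rpow_add hdpos]
          norm_num
        have h4M : 4 * M / R ^ 2 = 4 * M * d ^ ((2:ℝ)/3) := by
          rw [hR2, div_eq_mul_inv]
          congr 1
          field_simp
          nlinarith [hinv]
        have hexp : (4 * R + 1) * d = 4 * (R * d) + d := by ring
        rw [hexp, hRd, h4M] at hkey
        calc r ≤ 4 * d ^ ((2:ℝ)/3) + d + 4 * M * d ^ ((2:ℝ)/3) := hkey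
          _ = d + A * d ^ ((2:ℝ)/3) := by rw [hA]; ring
      · -- 1 < d
        have hr2 : r ≤ 2 := DLaux.dualLipSet_elem_le_two _ _ hr
        have h1 : (1:ℝ) ≤ d ^ ((2:ℝ)/3) := Real.one_le_rpow hd1.le (by norm_num)
        nlinarith [mul_le_mul_of_nonneg_left h1 (by linarith : (0:ℝ) ≤ A)]
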